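/- For all n ≥ 1, 2n divides Σ_{d | n} φ(n/d) * C(2d, d). -/

import Mathlib

open Finset Pointwise

namespace Stmt13

instance act (m n : ℕ) : AddAction (ZMod m) {s : Finset (ZMod m) // s.card = n} where
  vadd g s := ⟨g +ᵥ s.1, by rw [Finset.card_vadd_finset]; exact s.2⟩
  zero_vadd s := Subtype.ext (zero_vadd _ s.1)
  add_vadd a b s := Subtype.ext (add_vadd a b s.1)

lemma vadd_coe {m n : ℕ} (g : ZMod m) (s : {s : Finset (ZMod m) // s.card = n}) :
    (g +ᵥ s).1 = g +ᵥ s.1 := rfl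

lemma card_fiber (m d : ℕ) [NeZero m] (hd : d ∣ m) (y : ZMod d) :
    (univ.filter (fun x : ZMod m => ZMod.castHom hd (ZMod d) x = y)).card = m / d := by
  haveI : NeZero d := ⟨fun h => by subst h; exact (NeZero.ne m) (Nat.eq_zero_of_zero_dvd hd)⟩
  set π := ZMod.castHom hd (ZMod d) with hπ
  have hsur : Function.Surjective π := by
    intro z
    exact ⟨(z.val : ZMod m), by rw [hπ]; simp [ZMod.natCast_val, map_natCast]⟩
  have hconst : ∀ y₁ y₂ : ZMod d,
      (univ.filter (fun x : ZMod m => π x = y₁)).card =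
      (univ.filter (fun x : ZMod m => π x = y₂)).card := by
    intro y₁ y₂
    obtain ⟨c, hc⟩ := hsur (y₂ - y₁)
    apply Finset.card_bij (fun x _ => x + c)
    · intro a ha
      simp only [mem_filter, mem_univ, true_and] at ha ⊢
      rw [map_add, ha, hc]; ring
    · intro a _ b _ h; exact add_right_cancel h
    · intro b hb
      simp only [mem_filter, mem_univ, true_and] at hb ⊢
      exact ⟨b - c, by rw [map_sub, hb, hc]; ring, by ring⟩
  have hsum : ∑ y : ZMod d, (univ.filter (fun x : ZMod m => π x = y)).card = m := by
    rw [← Finset.card_eq_sum_card_fiberwise (fun x _ => mem_univ (π x))]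
    simp [ZMod.card]
  have hc := Finset.sum_congr rfl fun z (_ : z ∈ (univ : Finset (ZMod d))) => hconst z y
  have hdm : d * (univ.filter (fun x : ZMod m => π x = y)).card = m := by
    have h4 : ∑ z : ZMod d, (univ.filter (fun x : ZMod m => π x = z)).card
        = d * (univ.filter (fun x : ZMod m => π x = y)).card := by
      rw [hc, Finset.sum_const, card_univ, ZMod.card, smul_eq_mul]
    exact h4.symm.trans hsum
  have h2 : d * (m / d) = m := Nat.mul_div_cancel' hd
  have h3 : 0 < d := Nat.pos_of_ne_zero (NeZero.ne d)
  exact (Nat.eq_of_mul_eq_mul_left h3 (h2.trans hdm.symm)).symm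

lemma card_preimage (m d : ℕ) [NeZero m] (hd : d ∣ m) (t : Finset (ZMod d)) :
    (univ.filter (fun x : ZMod m => ZMod.castHom hd (ZMod d) x ∈ t)).card
      = t.card * (m / d) := by
  set π := ZMod.castHom hd (ZMod d) with hπ
  rw [Finset.card_eq_sum_card_fiberwise
      (f := fun x => π x) (t := t) (s := univ.filter (fun x : ZMod m => π x ∈ t))
      (fun x hx => (mem_filter.mp hx).2)]
  rw [Finset.sum_congr rfl (fun y hy => ?_), Finset.sum_const, smul_eq_mul]
  show ((univ.filter (fun x : ZMod m => π x ∈ t)).filter (fun x => π x = y)).card = m / d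
  rw [Finset.filter_filter]
  have heq : (univ.filter fun a : ZMod m => π a ∈ t ∧ π a = y)
      = univ.filter (fun a : ZMod m => π a = y) :=
    Finset.filter_congr (fun x _ => ⟨fun h => h.2, fun h => ⟨h ▸ hy, h⟩⟩)
  rw [heq]
  exact card_fiber m d hd y

lemma fixed_iff (m d : ℕ) [NeZero m] (g : ZMod m) (hd : d ∣ m) (h1 : d ∣ g.val)
    (h2 : (d : ZMod m) ∈ AddSubgroup.zmultiples g) (s : Finset (ZMod m)) :
    g +ᵥ s = s ↔ ∀ x y : ZMod m,
      ZMod.castHom hd (ZMod d) x = ZMod.castHom hd (ZMod d) y → (x ∈ s ↔ y ∈ s) := by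
  haveI : NeZero d := ⟨fun h => by subst h; exact (NeZero.ne m) (Nat.eq_zero_of_zero_dvd hd)⟩
  set π := ZMod.castHom hd (ZMod d) with hπ
  have hπg : π g = 0 := by
    rw [hπ, ZMod.castHom_apply, ← ZMod.natCast_val]
    exact (ZMod.natCast_eq_zero_iff g.val d).mpr h1
  constructor
  · intro hs
    have hmem : ∀ x : ZMod m, g + x ∈ s ↔ x ∈ s := by
      intro x
      conv_lhs => rw [← hs]
      exact Finset.vadd_mem_vadd_finset_iff g
    set H : AddSubgroup (ZMod m) :=
      { carrier := {c : ZMod m | ∀ x, c + x ∈ s ↔ x ∈ s}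
        zero_mem' := fun x => by simp
        add_mem' := fun {a b} ha hb x => by
          rw [add_assoc]; exact (ha _).trans (hb _)
        neg_mem' := fun {a} ha x => by
          have := ha (-a + x)
          rw [add_neg_cancel_left] at this
          exact this.symm } with hH
    have hgH : g ∈ H := hmem
    have hdH : ((d : ℕ) : ZMod m) ∈ H := AddSubgroup.zmultiples_le.mpr hgH h2
    intro x y hxy
    have hz : π (y - x) = 0 := by rw [map_sub, hxy, sub_self]
    have hdvd : d ∣ (y - x).val := by
      rw [hπ, ZMod.castHom_apply, ← ZMod.natCast_val] at hz
      exact (ZMod.natCast_eq_zero_iff _ d).mp hz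
    obtain ⟨t, ht⟩ := hdvd
    have hyx : y - x ∈ H := by
      have : y - x = t • ((d : ℕ) : ZMod m) := by
        rw [← ZMod.natCast_zmod_val (y - x), ht]
        push_cast
        rw [nsmul_eq_mul]
        ring
      rw [this]
      exact AddSubgroup.nsmul_mem H hdH t
    have := hyx x
    rw [sub_add_cancel] at this
    exact this.symm
  · intro hP
    show s.image (g + ·) = s
    ext a
    simp only [Finset.mem_image]
    constructor
    · rintro ⟨b, hb, rfl⟩
      exact (hP b (g + b) (by rw [map_add, hπg, zero_add])).mp hb
    · intro ha
      exact ⟨a - g, (hP a (a - g) (by rw [map_sub, hπg, sub_zero])).mp ha, by ring⟩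

lemma gcd_mem_zmultiples (m : ℕ) [NeZero m] (g : ZMod m) :
    ((m.gcd g.val : ℕ) : ZMod m) ∈ AddSubgroup.zmultiples g := by
  refine ⟨Nat.gcdB m g.val, ?_⟩
  show (Nat.gcdB m g.val) • g = ((m.gcd g.val : ℕ) : ZMod m)
  have h := Nat.gcd_eq_gcd_ab m g.val
  have h2 : ((m.gcd g.val : ℤ) : ZMod m)
      = ((m * Nat.gcdA m g.val + g.val * Nat.gcdB m g.val : ℤ) : ZMod m) := by
    rw [← h]
  push_cast at h2
  rw [ZMod.natCast_self, ZMod.natCast_zmod_val] at h2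
  rw [zsmul_eq_mul]
  rw [h2]
  ring

lemma card_fixedBy (n m : ℕ) (_hn : 1 ≤ n) (hm : m = 2*n) [NeZero m] (g : ZMod m) :
    Nat.card (AddAction.fixedBy {s : Finset (ZMod m) // s.card = n} g) =
      if 2 ∣ m.gcd g.val then (m.gcd g.val).choose (m.gcd g.val / 2) else 0 := by
  set d := m.gcd g.val with hdd
  have hd : d ∣ m := Nat.gcd_dvd_left m g.val
  have hdg : d ∣ g.val := Nat.gcd_dvd_right m g.val
  haveI : NeZero d := ⟨fun h => (NeZero.ne m) (Nat.eq_zero_of_zero_dvd (h ▸ hd))⟩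
  have hd0 : 0 < d := Nat.pos_of_ne_zero (NeZero.ne d)
  have hm0 : 0 < m := Nat.pos_of_ne_zero (NeZero.ne m)
  have hq : 0 < m / d := Nat.div_pos (Nat.le_of_dvd hm0 hd) hd0
  have h2 : d * (m / d) = m := Nat.mul_div_cancel' hd
  set π := ZMod.castHom hd (ZMod d) with hπ
  have hzm := gcd_mem_zmultiples m g
  have hEquiv : AddAction.fixedBy {s : Finset (ZMod m) // s.card = n} g ≃
      {t : Finset (ZMod d) // 2 * t.card = d} := by
    refine Equiv.ofBijective (fun s => ⟨s.1.1.image π, ?_⟩) ⟨?_, ?_⟩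
    · -- card condition
      obtain ⟨⟨s, hcard⟩, hfix⟩ := s
      have hfix' : g +ᵥ s = s := congrArg Subtype.val hfix
      have hP := (fixed_iff m d g hd hdg hzm s).mp hfix'
      have hpre : univ.filter (fun x : ZMod m => π x ∈ s.image π) = s := by
        ext x
        simp only [mem_filter, mem_univ, true_and, Finset.mem_image]
        exact ⟨fun ⟨y, hy, hyx⟩ => (hP y x hyx).mp hy, fun hx => ⟨x, hx, rfl⟩⟩
      have hc := card_preimage m d hd (s.image π)
      rw [hpre, hcard] at hc
      show 2 * (s.image π).card = d
      have hkey : (2 * (s.image π).card) * (m / d) = d * (m / d) := by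
        rw [mul_assoc, ← hc, ← hm]
        exact h2.symm
      exact Nat.eq_of_mul_eq_mul_right hq hkey
    · -- injective
      rintro ⟨⟨s, hs⟩, hfixs⟩ ⟨⟨u, hu⟩, hfixu⟩ h
      simp only [Subtype.mk.injEq] at h ⊢
      have hPs := (fixed_iff m d g hd hdg hzm s).mp (congrArg Subtype.val hfixs)
      have hPu := (fixed_iff m d g hd hdg hzm u).mp (congrArg Subtype.val hfixu)
      have hpres : univ.filter (fun x : ZMod m => π x ∈ s.image π) = s := by
        ext x
        simp only [mem_filter, mem_univ, true_and, Finset.mem_image]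
        exact ⟨fun ⟨y, hy, hyx⟩ => (hPs y x hyx).mp hy, fun hx => ⟨x, hx, rfl⟩⟩
      have hpreu : univ.filter (fun x : ZMod m => π x ∈ u.image π) = u := by
        ext x
        simp only [mem_filter, mem_univ, true_and, Finset.mem_image]
        exact ⟨fun ⟨y, hy, hyx⟩ => (hPu y x hyx).mp hy, fun hx => ⟨x, hx, rfl⟩⟩
      have h' : s.image π = u.image π := h
      rw [← hpres, ← hpreu, h']
    · -- surjective
      rintro ⟨t, ht⟩
      have hfix : g +ᵥ (univ.filter (fun x : ZMod m => π x ∈ t)) =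
          univ.filter (fun x : ZMod m => π x ∈ t) := by
        rw [fixed_iff m d g hd hdg hzm]
        intro x y hxy
        simp only [mem_filter, mem_univ, true_and, hxy]
        rw [hπ, hxy]
      have hcard : (univ.filter (fun x : ZMod m => π x ∈ t)).card = n := by
        rw [card_preimage m d hd t]
        have hkey : 2 * (t.card * (m / d)) = 2 * n := by
          rw [← mul_assoc, ht, h2, hm]
        omega
      refine ⟨⟨⟨univ.filter (fun x : ZMod m => π x ∈ t), hcard⟩, Subtype.ext hfix⟩, ?_⟩
      simp only [Subtype.mk.injEq]
      ext z
      simp only [Finset.mem_image, mem_filter, mem_univ, true_and]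
      constructor
      · rintro ⟨x, hx, rfl⟩; exact hx
      · intro hz
        exact ⟨(z.val : ZMod m), by simp [hπ, ZMod.natCast_val, map_natCast, hz], by
          simp [hπ, ZMod.natCast_val, map_natCast]⟩
  rw [Nat.card_congr hEquiv]
  by_cases hpar : 2 ∣ d
  · rw [if_pos hpar]
    obtain ⟨e, he⟩ := hpar
    have heq : {t : Finset (ZMod d) // 2 * t.card = d} ≃ {t : Finset (ZMod d) // t.card = e} :=
      Equiv.subtypeEquivRight (fun t => by omega)
    rw [Nat.card_congr heq, Nat.card_eq_fintype_card, Fintype.card_finset_len, ZMod.card]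
    congr 1
    omega
  · rw [if_neg hpar, Nat.card_eq_zero]
    exact Or.inl ⟨fun t => hpar ⟨t.1.card, t.2.symm⟩⟩

end Stmt13

/-- for all `n ≥ 1`, `2n` divides `Σ_{d | n} φ(n/d) C(2d, d)`. -/
theorem stmt_13 (n : ℕ) (hn : 1 ≤ n) :
    2 * n ∣ ∑ d ∈ n.divisors, Nat.totient (n / d) * Nat.choose (2 * d) d := by
  haveI : NeZero (2*n) := ⟨by omega⟩
  set F : ℕ → ℕ := fun d => if 2 ∣ d then d.choose (d/2) else 0 with hF
  -- Burnside
  haveI : ∀ g : ZMod (2*n),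
      Fintype (AddAction.fixedBy {s : Finset (ZMod (2*n)) // s.card = n} g) :=
    fun g => Fintype.ofFinite _
  haveI : Fintype (AddAction.orbitRel.Quotient (ZMod (2*n))
      {s : Finset (ZMod (2*n)) // s.card = n}) := Fintype.ofFinite _
  have hB := AddAction.sum_card_fixedBy_eq_card_orbits_mul_card_addGroup
    (ZMod (2*n)) {s : Finset (ZMod (2*n)) // s.card = n}
  rw [ZMod.card] at hB
  -- rewrite each fixed-point count
  have h1 : ∑ g : ZMod (2*n),
      Fintype.card (AddAction.fixedBy {s : Finset (ZMod (2*n)) // s.card = n} g)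
      = ∑ g : ZMod (2*n), F ((2*n).gcd g.val) := by
    refine Finset.sum_congr rfl fun g _ => ?_
    rw [← Nat.card_eq_fintype_card, Stmt13.card_fixedBy n (2*n) hn rfl g]
  -- transfer to a sum over `range (2*n)`
  have h2 : ∑ g : ZMod (2*n), F ((2*n).gcd g.val)
      = ∑ k ∈ Finset.range (2*n), F ((2*n).gcd k) := by
    refine Finset.sum_nbij' (fun g : ZMod (2*n) => g.val) (fun k => (k : ZMod (2*n)))
      ?_ ?_ ?_ ?_ ?_
    · intro g _; exact Finset.mem_range.mpr (ZMod.val_lt g)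
    · intro k _; exact Finset.mem_univ _
    · intro g _; exact ZMod.natCast_zmod_val g
    · intro k hk; exact ZMod.val_cast_of_lt (Finset.mem_range.mp hk)
    · intro g _; rfl
  -- group by gcd
  have h3 : ∑ k ∈ Finset.range (2*n), F ((2*n).gcd k)
      = ∑ d ∈ (2*n).divisors, Nat.totient ((2*n)/d) * F d := by
    have hfib := Finset.sum_fiberwise_of_maps_to
      (g := fun k => (2*n).gcd k) (t := (2*n).divisors)
      (fun k (_ : k ∈ Finset.range (2*n)) =>
        Nat.mem_divisors.mpr ⟨Nat.gcd_dvd_left _ _, by omega⟩)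
      (fun k => F ((2*n).gcd k))
    rw [← hfib]
    refine Finset.sum_congr rfl fun d hd => ?_
    have : ∀ k ∈ (Finset.range (2*n)).filter (fun k => (2*n).gcd k = d),
        F ((2*n).gcd k) = F d := fun k hk => by
      rw [(Finset.mem_filter.mp hk).2]
    rw [Finset.sum_congr rfl this, Finset.sum_const, smul_eq_mul]
    congr 1
    exact (Nat.totient_div_of_dvd (Nat.dvd_of_mem_divisors hd)).symm
  -- reindex to divisors of n
  have h4 : ∑ d ∈ (2*n).divisors, Nat.totient ((2*n)/d) * F d
      = ∑ d ∈ n.divisors, Nat.totient (n / d) * Nat.choose (2 * d) d := by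
    have hsub : n.divisors.image (fun e => 2*e) ⊆ (2*n).divisors := by
      intro d hd
      obtain ⟨e, he, rfl⟩ := Finset.mem_image.mp hd
      obtain ⟨he1, -⟩ := Nat.mem_divisors.mp he
      exact Nat.mem_divisors.mpr ⟨mul_dvd_mul_left 2 he1, by omega⟩
    rw [← Finset.sum_subset hsub (fun d hd hnot => ?_)]
    · rw [Finset.sum_image (fun e _ e' _ h => by omega)]
      refine Finset.sum_congr rfl fun e he => ?_
      have he1 : 0 < e := Nat.pos_of_mem_divisors he
      have hd2 : (2*n)/(2*e) = n/e := Nat.mul_div_mul_left n e (by norm_num)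
      have hF2 : F (2*e) = (2*e).choose e := by
        rw [hF]
        simp only [if_pos (Dvd.intro e rfl)]
        congr 1
        omega
      rw [hd2, hF2]
    · -- terms with d not of the form 2e vanish
      have : ¬ 2 ∣ d := by
        rintro ⟨e, rfl⟩
        obtain ⟨hd1, -⟩ := Nat.mem_divisors.mp hd
        have : e ∣ n := (mul_dvd_mul_iff_left (by norm_num : (2:ℕ) ≠ 0)).mp hd1
        exact hnot (Finset.mem_image.mpr ⟨e, Nat.mem_divisors.mpr ⟨this, by omega⟩, rfl⟩)
      rw [hF]
      simp [this]
  rw [← h4, ← h3, ← h2, ← h1, hB]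
  exact dvd_mul_left _ _
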